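/- The function 𝓗(x,z) defined with Hamiltonians Ĥ^i in the previous context can be written as the sum of a concave function of z and the function z ↦ −(1/2) min(min_{i≤d−1} x_i, 1−∑_{i≤d−1} x_i) ∑_{i=1}^{d−1} z_i^2; in particular it is strictly concave in z whenever x lies in the interior of Ŝ_d. -/

import Mathlib

open Set

noncomputable section

/-- `Ĥ^i(z) = −(1/2)(∑_{j≠i}((z_i−z_j)₊)² + (z_i)₊²)` for `i ≤ d−1` (here `n = d−1`). -/
def hamHatI (n : ℕ) (i : Fin n) (z : Fin n → ℝ) : ℝ :=
  -(1 / 2) * ((∑ j ∈ Finset.univ.erase i, max (z i - z j) 0 ^ 2) + max (z i) 0 ^ 2)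

/-- `Ĥ^d(z) = −(1/2)∑_j((−z_j)₊)²`. -/
def hamHatD (n : ℕ) (z : Fin n → ℝ) : ℝ :=
  -(1 / 2) * ∑ j, max (-z j) 0 ^ 2

/-- `𝓗(x,z) = ∑_{i≤d−1} x_i Ĥ^i(z) + x^{−d} Ĥ^d(z)` with `x^{−d} = 1 − ∑_{i≤d−1} x_i`. -/
def hamCal (n : ℕ) (x z : Fin n → ℝ) : ℝ :=
  (∑ i, x i * hamHatI n i z) + (1 - ∑ i, x i) * hamHatD n z

lemma convexOn_max_sq {n : ℕ} (f : (Fin n → ℝ) →ₗ[ℝ] ℝ) :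
    ConvexOn ℝ Set.univ (fun z => max (f z) 0 ^ 2) := by
  have h0 : ConvexOn ℝ Set.univ (fun t : ℝ => max t 0) := by
    have h := (convexOn_id (convex_univ (𝕜 := ℝ) (E := ℝ))).sup
      (convexOn_const (0 : ℝ) convex_univ)
    exact h
  have h1 : ConvexOn ℝ Set.univ (fun t : ℝ => max t 0 ^ 2) := by
    have := h0.pow (fun t _ => le_max_right t 0) 2
    exact this
  have h2 := h1.comp_affineMap f.toAffineMap
  simpa [Function.comp_def] using h2

lemma convexOn_finset_sum {n : ℕ} {ι : Type*} (t : Finset ι) (f : ι → (Fin n → ℝ) → ℝ)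
    (h : ∀ i ∈ t, ConvexOn ℝ Set.univ (f i)) :
    ConvexOn ℝ Set.univ (fun z => ∑ i ∈ t, f i z) := by
  classical
  induction t using Finset.induction_on with
  | empty => simpa using convexOn_const (0 : ℝ) convex_univ
  | @insert a s hi ih =>
    simp only [Finset.sum_insert hi]
    exact (h a (Finset.mem_insert_self a s)).add
      (ih fun i hi' => h i (Finset.mem_insert_of_mem hi'))

lemma convexOn_smul' {n : ℕ} {c : ℝ} (hc : 0 ≤ c) {f : (Fin n → ℝ) → ℝ}
    (hf : ConvexOn ℝ Set.univ f) : ConvexOn ℝ Set.univ (fun z => c * f z) := by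
  simpa [smul_eq_mul] using hf.smul hc

lemma max_sq_add_max_neg_sq (t : ℝ) : max t 0 ^ 2 + max (-t) 0 ^ 2 = t ^ 2 := by
  rcases le_total t 0 with h | h
  · rw [max_eq_right h, max_eq_left (by linarith)]; ring
  · rw [max_eq_left h, max_eq_right (by linarith)]; ring

lemma strictConvexOn_sum_sq {n : ℕ} {c : ℝ} (hc : 0 < c) :
    StrictConvexOn ℝ Set.univ (fun z : Fin n → ℝ => c * ∑ i, z i ^ 2) := by
  refine ⟨convex_univ, fun z _ w _ hzw a b ha hb hab => ?_⟩
  simp only [smul_eq_mul, Pi.add_apply, Pi.smul_apply]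
  have key : ∑ i, (a * z i + b * w i) ^ 2 < a * ∑ i, z i ^ 2 + b * ∑ i, w i ^ 2 := by
    rw [Finset.mul_sum, Finset.mul_sum, ← Finset.sum_add_distrib]
    obtain ⟨i₀, hi₀⟩ : ∃ i, z i ≠ w i := by
      by_contra h; push_neg at h; exact hzw (funext h)
    refine Finset.sum_lt_sum (fun i _ => by nlinarith [sq_nonneg (z i - w i), mul_pos ha hb])
      ⟨i₀, Finset.mem_univ i₀, ?_⟩
    have hne0 : z i₀ - w i₀ ≠ 0 := sub_ne_zero.mpr hi₀
    have : 0 < (z i₀ - w i₀) ^ 2 := by positivity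
    nlinarith [mul_pos ha hb]
  calc c * ∑ i, (a * z i + b * w i) ^ 2
      < c * (a * ∑ i, z i ^ 2 + b * ∑ i, w i ^ 2) := by
        exact mul_lt_mul_of_pos_left key hc
    _ = a * (c * ∑ i, z i ^ 2) + b * (c * ∑ i, w i ^ 2) := by ring

theorem hamiltonian_concave_decomposition
    (n : ℕ) (hn : 1 ≤ n) (x : Fin n → ℝ)
    (hx : ∀ i, 0 ≤ x i) (hxs : ∑ i, x i ≤ 1) :
    (∃ φ : (Fin n → ℝ) → ℝ, ConcaveOn ℝ Set.univ φ ∧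
      ∀ z : Fin n → ℝ,
        hamCal n x z
          = φ z - (1 / 2) * min (⨅ i, x i) (1 - ∑ i, x i) * ∑ i, z i ^ 2)
    ∧ ((∀ i, 0 < x i) → ∑ i, x i < 1 →
        StrictConcaveOn ℝ Set.univ (fun z : Fin n → ℝ => hamCal n x z)) := by
  have hne : Nonempty (Fin n) := ⟨⟨0, hn⟩⟩
  obtain ⟨i₀, hi₀⟩ := Finite.exists_min x
  have hinf : (⨅ i, x i) = x i₀ := by
    refine le_antisymm (ciInf_le (Finite.bddBelow_range x) i₀) (le_ciInf hi₀)
  set S : ℝ := ∑ i, x i with hS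
  set c : ℝ := min (⨅ i, x i) (1 - S) with hc
  have hc_le_x : ∀ i, c ≤ x i := fun i =>
    le_trans (min_le_left _ _) (hinf ▸ hi₀ i)
  have hc_le : c ≤ 1 - S := min_le_right _ _
  -- the concave part
  set φ : (Fin n → ℝ) → ℝ :=
    fun z => hamCal n x z + (1 / 2) * c * ∑ i, z i ^ 2 with hφ
  -- explicit convex form of -φ
  set G : (Fin n → ℝ) → ℝ := fun z =>
    ∑ i, ((1 / 2) * x i * ∑ j ∈ Finset.univ.erase i, max (z i - z j) 0 ^ 2
      + ((1 / 2) * (x i - c) * max (z i) 0 ^ 2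
      + (1 / 2) * (1 - S - c) * max (-z i) 0 ^ 2)) with hG
  have hGconv : ConvexOn ℝ Set.univ G := by
    refine convexOn_finset_sum _ _ (fun i _ => ?_)
    refine ConvexOn.add ?_ (ConvexOn.add ?_ ?_)
    · refine convexOn_smul' (mul_nonneg (by norm_num) (hx i)) ?_
      refine convexOn_finset_sum _ _ (fun j _ => ?_)
      exact convexOn_max_sq (LinearMap.proj (R := ℝ) (φ := fun _ : Fin n => ℝ) i
        - LinearMap.proj j)
    · refine convexOn_smul' (mul_nonneg (by norm_num) (by linarith [hc_le_x i])) ?_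
      simpa using convexOn_max_sq (LinearMap.proj (R := ℝ) (φ := fun _ : Fin n => ℝ) i)
    · refine convexOn_smul' (mul_nonneg (by norm_num) (by linarith [hc_le])) ?_
      simpa using convexOn_max_sq (-LinearMap.proj (R := ℝ) (φ := fun _ : Fin n => ℝ) i)
  have key : ∀ z, φ z + G z = 0 := by
    intro z
    have e2 : (1 - S) * hamHatD n z
        = ∑ i, (1 - S) * (-(1 / 2) * max (-z i) 0 ^ 2) := by
      rw [hamHatD, Finset.mul_sum, Finset.mul_sum]
    have e3 : (1 / 2 : ℝ) * c * ∑ i, z i ^ 2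
        = ∑ i, (1 / 2) * c * z i ^ 2 := Finset.mul_sum _ _ _
    simp only [hφ, hG, hamCal, ← hS]
    rw [e2, e3, ← Finset.sum_add_distrib, ← Finset.sum_add_distrib,
      ← Finset.sum_add_distrib]
    apply Finset.sum_eq_zero
    intro i _
    rw [hamHatI]
    have h := max_sq_add_max_neg_sq (z i)
    linear_combination (-(1 / 2 : ℝ) * c) * h
  have hGeq : ∀ z, -φ z = G z := fun z => by have := key z; linarith
  have hφconc : ConcaveOn ℝ Set.univ φ := by
    have : -φ = G := funext hGeq
    rw [← neg_convexOn_iff, this]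
    exact hGconv
  have hdecomp : ∀ z : Fin n → ℝ,
      hamCal n x z = φ z - (1 / 2) * c * ∑ i, z i ^ 2 := fun z => by
    simp only [hφ]; ring
  refine ⟨⟨φ, hφconc, hdecomp⟩, fun hxp hxs' => ?_⟩
  have hcpos : 0 < c := lt_min (hinf ▸ hxp i₀) (by linarith)
  have hstrict : StrictConcaveOn ℝ Set.univ
      (fun z : Fin n → ℝ => -((1 / 2) * c * ∑ i, z i ^ 2)) := by
    have h := strictConvexOn_sum_sq (n := n) (c := (1 / 2) * c) (by positivity)
    exact h.neg
  have : (fun z : Fin n → ℝ => hamCal n x z)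
      = fun z => φ z + -((1 / 2) * c * ∑ i, z i ^ 2) := by
    funext z; rw [hdecomp z]; ring
  rw [this]
  exact hφconc.add_strictConcaveOn hstrict

end
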